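/- Let D be an integral domain with quotient field K, n a positive integer, and p ∈ D[X] a monic polynomial of degree n with companion matrix C_p ∈ Mₙ(D). Then a polynomial f ∈ K[X] is integer-valued on the set Mₙᵖ(D) of all matrices in Mₙ(D) with characteristic polynomial p if and only if f is integer-valued on the single matrix C_p; that is, Int(Mₙᵖ(D), Mₙ(D)) = Int({C_p}, Mₙ(D)). -/

import Mathlib

open Polynomial

/-- `IntOn D K S` is the set of polynomials `f ∈ K[X]` that are integer-valued on the set
`S ⊆ Mₙ(D)`: for every `M ∈ S`, evaluating `f` at the image of `M` in `Mₙ(K)` yields a matrix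
all of whose entries lie in (the image of) `D`. -/
def IntOn (D K : Type*) [CommRing D] [Field K] [Algebra D K] {n : ℕ}
    (S : Set (Matrix (Fin n) (Fin n) D)) : Set (Polynomial K) :=
  {f | ∀ M ∈ S, ∀ i j, ∃ d : D,
    algebraMap D K d = (Polynomial.aeval (M.map (algebraMap D K)) f) i j}

/-- The companion matrix of a (monic, degree `n`) polynomial `p`: it has `1`'s on the
subdiagonal, the negatives of the coefficients of `p` in the last column, and `0` elsewhere.
Its characteristic polynomial is `p`. -/
def companion (D : Type*) [CommRing D] (n : ℕ) (p : Polynomial D) :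
    Matrix (Fin n) (Fin n) D :=
  fun i j => (if (i : ℕ) = (j : ℕ) + 1 then 1 else 0) +
    (if (j : ℕ) = n - 1 then -(p.coeff i) else 0)

section Aux

variable {R : Type*} [CommRing R] {n : ℕ}

lemma companion_pow_col (hn : 0 < n) (P : R[X]) :
    ∀ k, k < n → ∀ i : Fin n,
      ((companion R n P) ^ k) i ⟨0, hn⟩ = if (i : ℕ) = k then 1 else 0
  | 0, _, i => by simp [Matrix.one_apply, Fin.ext_iff]
  | (k+1), hk, i => by
    have hk' : k < n := Nat.lt_of_succ_lt hk
    rw [pow_succ', Matrix.mul_apply]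
    simp only [companion_pow_col hn P k hk']
    have hiff : ∀ j : Fin n, ((j : ℕ) = k) ↔ (j = ⟨k, hk'⟩) := by
      intro j; simp [Fin.ext_iff]
    simp_rw [hiff, mul_ite, mul_one, mul_zero]
    rw [Finset.sum_ite_eq' Finset.univ (⟨k, hk'⟩ : Fin n) (fun j => companion R n P i j)]
    have hkne : k ≠ n - 1 := by omega
    simp [companion, hkne]

lemma companion_pow_n_col (hn : 0 < n) (P : R[X]) (i : Fin n) :
    ((companion R n P) ^ n) i ⟨0, hn⟩ = -(P.coeff i) := by
  obtain ⟨m, rfl⟩ : ∃ m, n = m + 1 := ⟨n - 1, by omega⟩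
  rw [pow_succ', Matrix.mul_apply]
  simp only [companion_pow_col hn P m (by omega)]
  have hiff : ∀ j : Fin (m+1), ((j : ℕ) = m) ↔ (j = ⟨m, by omega⟩) := by
    intro j; simp [Fin.ext_iff]
  simp_rw [hiff, mul_ite, mul_one, mul_zero]
  rw [Finset.sum_ite_eq' Finset.univ (⟨m, by omega⟩ : Fin (m+1))
    (fun j => companion R (m+1) P i j)]
  have hine : (i : ℕ) ≠ m + 1 := by omega
  simp [companion, hine]

lemma aeval_companion_col (hn : 0 < n) (P f : R[X]) (hf : f.natDegree < n) (i : Fin n) :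
    (Polynomial.aeval (companion R n P) f) i ⟨0, hn⟩ = f.coeff i := by
  rw [Polynomial.aeval_eq_sum_range' hf, Matrix.sum_apply]
  simp only [Matrix.smul_apply, smul_eq_mul]
  have : ∀ k ∈ Finset.range n,
      f.coeff k * ((companion R n P) ^ k) i ⟨0, hn⟩
        = if (i : ℕ) = k then f.coeff k else 0 := by
    intro k hk
    rw [companion_pow_col hn P k (Finset.mem_range.mp hk)]
    simp [mul_ite]
  rw [Finset.sum_congr rfl this, Finset.sum_ite_eq (Finset.range n) (i : ℕ) (fun k => f.coeff k)]
  simp [i.isLt]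

lemma aeval_companion_self_col (hn : 0 < n) (P : R[X]) (hP : P.Monic)
    (hdeg : P.natDegree = n) (i : Fin n) :
    (Polynomial.aeval (companion R n P) P) i ⟨0, hn⟩ = 0 := by
  rw [Polynomial.aeval_eq_sum_range' (show P.natDegree < n + 1 by omega),
    Finset.sum_range_succ, Matrix.add_apply, Matrix.sum_apply]
  simp only [Matrix.smul_apply, smul_eq_mul]
  have h1 : ∀ k ∈ Finset.range n,
      P.coeff k * ((companion R n P) ^ k) i ⟨0, hn⟩
        = if (i : ℕ) = k then P.coeff k else 0 := by
    intro k hk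
    rw [companion_pow_col hn P k (Finset.mem_range.mp hk)]
    simp [mul_ite]
  rw [Finset.sum_congr rfl h1,
    Finset.sum_ite_eq (Finset.range n) (i : ℕ) (fun k => P.coeff k),
    companion_pow_n_col hn P i]
  have hlc : P.coeff n = 1 := by
    have := hP.coeff_natDegree
    rwa [hdeg] at this
  simp [i.isLt, hlc]

lemma charpoly_companion {K : Type*} [Field K] (hn : 0 < n) (P : K[X]) (hP : P.Monic)
    (hdeg : P.natDegree = n) : (companion K n P).charpoly = P := by
  set C := companion K n P with hC
  set c := C.charpoly with hc
  have hcm : c.Monic := Matrix.charpoly_monic C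
  have hcd : c.natDegree = n := by
    rw [hc, Matrix.charpoly_natDegree_eq_dim, Fintype.card_fin]
  have h0 : Polynomial.aeval C c = 0 := Matrix.aeval_self_charpoly C
  by_contra hne
  have hr : c - P ≠ 0 := sub_ne_zero.mpr hne
  have hdlt : (c - P).natDegree < n := by
    have hdc : c.degree = (n : WithBot ℕ) := by
      rw [Polynomial.degree_eq_natDegree hcm.ne_zero, hcd]
    have hdP : P.degree = (n : WithBot ℕ) := by
      rw [Polynomial.degree_eq_natDegree hP.ne_zero, hdeg]
    have := Polynomial.degree_sub_lt (hdc.trans hdP.symm) hcm.ne_zero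
      (by rw [hcm.leadingCoeff, hP.leadingCoeff])
    rw [hdc] at this
    exact (Polynomial.natDegree_lt_iff_degree_lt hr).mpr this
  apply hr
  ext m
  rcases lt_or_ge m n with hm | hm
  · have := aeval_companion_col hn P (c - P) hdlt ⟨m, hm⟩
    rw [map_sub, h0, Matrix.sub_apply] at this
    have h2 := aeval_companion_self_col hn P hP hdeg ⟨m, hm⟩
    rw [← hC] at h2
    rw [h2] at this
    simpa using this.symm
  · rw [Polynomial.coeff_eq_zero_of_natDegree_lt (lt_of_lt_of_le hdlt hm)]
    simp

lemma companion_map {R S : Type*} [CommRing R] [CommRing S] (φ : R →+* S) (P : R[X]) :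
    (companion R n P).map φ = companion S n (P.map φ) := by
  ext i j
  simp [companion, Matrix.map_apply, apply_ite φ, Polynomial.coeff_map]

end Aux

/-- Let `D` be a domain with quotient field `K`, `n` positive and `p ∈ D[X]`
monic of degree `n` with companion matrix `C_p ∈ Mₙ(D)`.  Then a polynomial `f ∈ K[X]` is
integer-valued on the set `Mₙᵖ(D)` of matrices with characteristic polynomial `p` iff it is
integer-valued on the single matrix `C_p`: `Int(Mₙᵖ(D), Mₙ(D)) = Int({C_p}, Mₙ(D))`. -/
theorem intOn_charpoly_eq_intOn_companion (D K : Type*) [CommRing D] [IsDomain D] [Field K]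
    [Algebra D K] [IsFractionRing D K] (n : ℕ) (hn : 0 < n) (p : D[X]) (hp : p.Monic)
    (hdeg : p.natDegree = n) :
    IntOn D K {M : Matrix (Fin n) (Fin n) D | M.charpoly = p} =
      IntOn D K {companion D n p} := by
  have hφ : Function.Injective (algebraMap D K) := IsFractionRing.injective D K
  set φ := algebraMap D K with hφdef
  set pK := p.map φ with hpK
  have hpKm : pK.Monic := hp.map φ
  have hpKd : pK.natDegree = n := by rw [hpK, hp.natDegree_map, hdeg]
  have hmapC : (companion D n p).map φ = companion K n pK := companion_map φ p
  have hcharK : (companion K n pK).charpoly = pK := charpoly_companion hn pK hpKm hpKd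
  have hcharD : (companion D n p).charpoly = p := by
    apply Polynomial.map_injective φ hφ
    rw [← Matrix.charpoly_map, hmapC, hcharK]
  ext f
  constructor
  · intro h M hM i j
    rw [Set.mem_singleton_iff] at hM
    subst hM
    exact h _ hcharD i j
  · intro h M hM i j
    have hM' : M.charpoly = p := hM
    -- key polynomials
    set r := f %ₘ pK with hrdef
    have hfr : pK * (f /ₘ pK) + r = f := by
      rw [hrdef, add_comm]
      exact Polynomial.modByMonic_add_div f pK
    have hrd : r.natDegree < n := by
      have h1 : r.degree < pK.degree := Polynomial.degree_modByMonic_lt f hpKm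
      have h2 : pK.degree = (n : WithBot ℕ) := by
        rw [Polynomial.degree_eq_natDegree hpKm.ne_zero, hpKd]
      rcases eq_or_ne r 0 with h0 | h0
      · simpa [h0] using hn
      · exact (Polynomial.natDegree_lt_iff_degree_lt h0).mpr (h2 ▸ h1)
    have hCK0 : Polynomial.aeval (companion K n pK) pK = 0 := by
      have := Matrix.aeval_self_charpoly (companion K n pK)
      rwa [hcharK] at this
    -- coefficients of r lie in D
    have hc : ∀ k : Fin n, ∃ d : D, φ d = r.coeff k := by
      intro k
      obtain ⟨d, hd⟩ := h (companion D n p) (Set.mem_singleton _) k ⟨0, hn⟩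
      refine ⟨d, ?_⟩
      rw [hd, hmapC]
      have heq : Polynomial.aeval (companion K n pK) f
          = Polynomial.aeval (companion K n pK) r := by
        conv_lhs => rw [← hfr]
        rw [map_add, map_mul, hCK0, zero_mul, zero_add]
      rw [heq, aeval_companion_col hn pK r hrd k]
    choose d hd using hc
    set r₀ : D[X] := ∑ k : Fin n, Polynomial.C (d k) * X ^ (k : ℕ) with hr₀def
    have hr₀coeff : ∀ m : ℕ, ∀ hm : m < n, r₀.coeff m = d ⟨m, hm⟩ := by
      intro m hm
      rw [hr₀def, Polynomial.finset_sum_coeff]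
      have : ∀ k : Fin n, (Polynomial.C (d k) * X ^ (k : ℕ)).coeff m
          = if k = (⟨m, hm⟩ : Fin n) then d k else 0 := by
        intro k
        rw [Polynomial.coeff_C_mul, Polynomial.coeff_X_pow]
        simp [Fin.ext_iff, eq_comm]
      rw [Finset.sum_congr rfl (fun k _ => this k),
        Finset.sum_ite_eq' Finset.univ (⟨m, hm⟩ : Fin n) (fun k => d k)]
      simp
    have hr₀map : r₀.map φ = r := by
      ext m
      rw [Polynomial.coeff_map]
      rcases lt_or_ge m n with hm | hm
      · rw [hr₀coeff m hm, hd ⟨m, hm⟩]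
      · rw [Polynomial.coeff_eq_zero_of_natDegree_lt (lt_of_lt_of_le hrd hm)]
        have : r₀.coeff m = 0 := by
          rw [hr₀def, Polynomial.finset_sum_coeff]
          apply Finset.sum_eq_zero
          intro k _
          rw [Polynomial.coeff_C_mul, Polynomial.coeff_X_pow]
          have : m ≠ (k : ℕ) := by omega
          simp [this]
        rw [this, map_zero]
    -- conclude
    refine ⟨(Polynomial.aeval M r₀) i j, ?_⟩
    have hMK0 : Polynomial.aeval (M.map φ) pK = 0 := by
      have := Matrix.aeval_self_charpoly (M.map φ)
      rwa [Matrix.charpoly_map, hM', ← hpK] at this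
    have h1 : Polynomial.aeval (M.map φ) f = Polynomial.aeval (M.map φ) r := by
      conv_lhs => rw [← hfr]
      rw [map_add, map_mul, hMK0, zero_mul, zero_add]
    have h2 : Polynomial.aeval (M.map φ) r
        = (Polynomial.aeval M r₀).map φ := by
      rw [← hr₀map, hφdef, Polynomial.aeval_map_algebraMap]
      have := Polynomial.aeval_algHom_apply
        (AlgHom.mapMatrix (m := Fin n) (Algebra.ofId D K)) M r₀
      simp [AlgHom.mapMatrix_apply, Algebra.ofId_apply] at this
      exact this
    rw [h1, h2, Matrix.map_apply]
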